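/- Let A be a unital Banach algebra (in particular a Banach algebra arising as a projective tensor product of unital C*-algebras) and suppose an automorphism of the form x ↦ u x u* with unitary u restricts, on elementary tensors of A = A₁ ⊗^γ A₂, to (φ ⊗ ψ)(v ⊗ w) = φ(v) ⊗ ψ(w) where φ(x)=axa*, ψ(x)=bxb* for unitaries a ∈ A₁, b ∈ A₂. Then (a ⊗ b)* u lies in the center of A₁ ⊗^γ A₂. -/
import Mathlib


/-- `ι` exhibits the complete unital normed algebra `T` as the Banach space projective
tensor product `A ⊗^γ B` of the unital Banach algebras `A` and `B`: the image of `ι`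
has dense span, `‖ι a b‖` is dominated by the projective cross norm, and every
contractive bilinear functional extends to a contractive functional on `T` (which pins
down the norm of `T` as the projective tensor norm). -/
structure IsProjectiveTensorProduct
    (A B T : Type) [NormedRing A] [NormedAlgebra ℂ A]
    [NormedRing B] [NormedAlgebra ℂ B]
    [NormedRing T] [NormedAlgebra ℂ T] [CompleteSpace T]
    (ι : A →L[ℂ] B →L[ℂ] T) : Prop where
  map_one' : ι 1 1 = 1
  map_mul' : ∀ (a c : A) (b d : B), ι a b * ι c d = ι (a * c) (b * d)
  norm_le' : ∀ (a : A) (b : B), ‖ι a b‖ ≤ ‖a‖ * ‖b‖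
  dense' : Dense ((Submodule.span ℂ (Set.range fun p : A × B => ι p.1 p.2) : Submodule ℂ T) : Set T)
  lift' : ∀ β : A →L[ℂ] B →L[ℂ] ℂ, ‖β‖ ≤ 1 →
    ∃ g : T →L[ℂ] ℂ, ‖g‖ ≤ 1 ∧ ∀ (a : A) (b : B), g (ι a b) = β a b

/-- `ι` exhibits `T` as the Banach space projective tensor product `A ⊗^γ B` of the
unital C*-algebras `A` and `B`, as a Banach `*`-algebra. -/
structure IsProjectiveStarTensorProduct
    (A B T : Type) [CStarAlgebra A] [CStarAlgebra B]
    [NormedRing T] [StarRing T] [NormedAlgebra ℂ T] [CompleteSpace T]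
    (ι : A →L[ℂ] B →L[ℂ] T)
    extends IsProjectiveTensorProduct A B T ι : Prop where
  map_star' : ∀ (a : A) (b : B), star (ι a b) = ι (star a) (star b)

/-- If conjugation by a unitary `u` of `A₁ ⊗^γ A₂` acts on elementary tensors as
conjugation by `a ⊗ b` for unitaries `a ∈ A₁`, `b ∈ A₂`, then `(a ⊗ b)* u` is central
in `A₁ ⊗^γ A₂`. -/
theorem star_tmul_mul_unitary_mem_center
    {A₁ A₂ T : Type} [CStarAlgebra A₁] [CStarAlgebra A₂]
    [NormedRing T] [StarRing T] [NormedAlgebra ℂ T] [CompleteSpace T]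
    {ι : A₁ →L[ℂ] A₂ →L[ℂ] T} (hT : IsProjectiveStarTensorProduct A₁ A₂ T ι)
    (u : T) (hu : star u * u = 1 ∧ u * star u = 1)
    (a : A₁) (ha : star a * a = 1 ∧ a * star a = 1)
    (b : A₂) (hb : star b * b = 1 ∧ b * star b = 1)
    (h : ∀ (v : A₁) (w : A₂), u * ι v w * star u = ι (a * v * star a) (b * w * star b)) :
    ∀ t : T, (star (ι a b) * u) * t = t * (star (ι a b) * u) := by

  set c := star (ι a b) * u with hc
  have hstar : star (ι a b) = ι (star a) (star b) := hT.map_star' a b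
  have key : ∀ (v : A₁) (w : A₂), c * ι v w = ι v w * c := by
    intro v w
    have h1 : u * ι v w = ι (a * v * star a) (b * w * star b) * u := by
      calc u * ι v w = u * ι v w * (star u * u) := by rw [hu.1, mul_one]
        _ = (u * ι v w * star u) * u := by rw [mul_assoc, mul_assoc, mul_assoc]
        _ = _ := by rw [h v w]
    have e1 : star a * (a * v * star a) = v * star a := by
      rw [mul_assoc a v, ← mul_assoc, ha.1, one_mul]
    have e2 : star b * (b * w * star b) = w * star b := by
      rw [mul_assoc b w, ← mul_assoc, hb.1, one_mul]
    calc c * ι v w = ι (star a) (star b) * (u * ι v w) := by rw [hc, hstar, mul_assoc]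
      _ = ι (star a) (star b) * (ι (a * v * star a) (b * w * star b) * u) := by rw [h1]
      _ = ι (star a * (a * v * star a)) (star b * (b * w * star b)) * u := by
          rw [← mul_assoc, hT.map_mul']
      _ = ι (v * star a) (w * star b) * u := by rw [e1, e2]
      _ = ι v w * c := by rw [hc, hstar, ← hT.map_mul', mul_assoc]
  intro t
  set L : T →L[ℂ] T :=
    ContinuousLinearMap.mul ℂ T c - (ContinuousLinearMap.mul ℂ T).flip c with hL
  have heq : Set.EqOn L 0
      ((Submodule.span ℂ (Set.range fun p : A₁ × A₂ => ι p.1 p.2) : Submodule ℂ T) : Set T) := by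
    intro s hs
    have hle : (Submodule.span ℂ (Set.range fun p : A₁ × A₂ => ι p.1 p.2) : Submodule ℂ T)
        ≤ LinearMap.ker (L : T →ₗ[ℂ] T) := by
      rw [Submodule.span_le]
      rintro x ⟨⟨v, w⟩, rfl⟩
      simp only [SetLike.mem_coe, LinearMap.mem_ker, ContinuousLinearMap.coe_coe, hL,
        ContinuousLinearMap.sub_apply, ContinuousLinearMap.mul_apply',
        ContinuousLinearMap.flip_apply, sub_eq_zero]
      exact key v w
    have := hle hs
    simpa using this
  have hL0 : (L : T → T) = 0 :=
    Continuous.ext_on hT.dense' L.continuous continuous_const heq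
  have : L t = 0 := by rw [hL0]; rfl
  have : c * t - t * c = 0 := by
    simpa [hL, ContinuousLinearMap.mul_apply', ContinuousLinearMap.flip_apply] using this
  exact sub_eq_zero.mp this
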